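/- arXiv:2107.14188 — 3 statements merged into one kernel-verified Lean document; each statement's English description precedes it below -/
import Mathlib

section
/- For a proper ideal I in a commutative ring A, the asymptotic Samuel function satisfies ν̄_{I^r}(f) = (1/r) ν̄_I(f) for every f ∈ A and every positive integer r. -/
set_option maxHeartbeats 1000000


open Filter ENNReal Topology

/-- The order `ν_I(f) = sup { m ∈ ℕ : f ∈ I^m }`, valued in `ℕ∞`. -/
noncomputable def nuI {A : Type*} [CommRing A] (I : Ideal A) (f : A) : ℕ∞ :=
  sSup {n : ℕ∞ | ∃ m : ℕ, n = m ∧ f ∈ I ^ m}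

/-- The asymptotic Samuel function `ν̄_I(f) = lim_n ν_I(f^n)/n`, valued in `ℝ≥0∞`. -/
noncomputable def nubar {A : Type*} [CommRing A] (I : Ideal A) (f : A) : ℝ≥0∞ :=
  Filter.atTop.limsup fun n : ℕ => (nuI I (f ^ n) : ℝ≥0∞) / (n : ℝ≥0∞)

lemma mem_pow_iff_le_nuI {A : Type*} [CommRing A] {I : Ideal A} {f : A} {m : ℕ} :
    f ∈ I ^ m ↔ (m : ℕ∞) ≤ nuI I f := by
  constructor
  · intro h
    exact le_sSup ⟨m, rfl, h⟩
  · intro h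
    by_contra hfm
    have hm : m ≠ 0 := by
      rintro rfl
      exact hfm (by simp)
    have hle : nuI I f ≤ ((m - 1 : ℕ) : ℕ∞) := by
      apply sSup_le
      rintro n ⟨k, rfl, hk⟩
      have hk' : k < m := by
        by_contra hk'
        push_neg at hk'
        exact hfm (Ideal.pow_le_pow_right hk' hk)
      exact_mod_cast Nat.le_sub_one_of_lt hk'
    have : (m : ℕ∞) ≤ ((m - 1 : ℕ) : ℕ∞) := h.trans hle
    have : m ≤ m - 1 := by exact_mod_cast this
    omega

lemma nuI_pow_mul_le {A : Type*} [CommRing A] (I : Ideal A) (g : A) {r : ℕ} (hr : 0 < r) :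
    (r : ℕ∞) * nuI (I ^ r) g ≤ nuI I g := by
  cases hb : nuI (I ^ r) g with
  | top =>
    have htop : nuI I g = ⊤ := by
      by_contra hne
      cases hn : nuI I g with
      | top => exact hne hn
      | coe n =>
        have h1 : ((n + 1 : ℕ) : ℕ∞) ≤ nuI (I ^ r) g := hb ▸ le_top
        have h2 : g ∈ (I ^ r) ^ (n + 1) := mem_pow_iff_le_nuI.mpr h1
        rw [← pow_mul] at h2
        have h3 : g ∈ I ^ (n + 1) := Ideal.pow_le_pow_right (Nat.le_mul_of_pos_left _ hr) h2
        have h4 : ((n + 1 : ℕ) : ℕ∞) ≤ nuI I g := mem_pow_iff_le_nuI.mp h3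
        rw [hn] at h4
        have : n + 1 ≤ n := by exact_mod_cast h4
        omega
    rw [htop]
    exact le_top
  | coe m =>
    have h1 : g ∈ (I ^ r) ^ m := mem_pow_iff_le_nuI.mpr (hb ▸ le_rfl)
    rw [← pow_mul] at h1
    have h2 : ((r * m : ℕ) : ℕ∞) ≤ nuI I g := mem_pow_iff_le_nuI.mp h1
    calc (r : ℕ∞) * (m : ℕ∞) = ((r * m : ℕ) : ℕ∞) := by rw [Nat.cast_mul]
    _ ≤ nuI I g := h2

lemma nuI_le_pow_mul {A : Type*} [CommRing A] (I : Ideal A) (g : A) {r : ℕ} (hr : 0 < r) :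
    nuI I g ≤ (r : ℕ∞) * nuI (I ^ r) g + ((r - 1 : ℕ) : ℕ∞) := by
  cases hb : nuI (I ^ r) g with
  | top =>
    have hne : (r : ℕ∞) ≠ 0 := by exact_mod_cast hr.ne'
    simp [ENat.mul_top hne]
  | coe m =>
    have hkey : nuI I g ≤ ((r * m + (r - 1) : ℕ) : ℕ∞) := by
      by_contra hlt
      push_neg at hlt
      have h1 : ((r * m + (r - 1) + 1 : ℕ) : ℕ∞) ≤ nuI I g := by
        have := Order.add_one_le_of_lt hlt
        exact_mod_cast this
      have heq : r * m + (r - 1) + 1 = r * (m + 1) := by rw [Nat.mul_succ]; omega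
      rw [heq] at h1
      have h2 : g ∈ I ^ (r * (m + 1)) := mem_pow_iff_le_nuI.mpr h1
      rw [pow_mul] at h2
      have h3 : ((m + 1 : ℕ) : ℕ∞) ≤ nuI (I ^ r) g := mem_pow_iff_le_nuI.mp h2
      rw [hb] at h3
      have : m + 1 ≤ m := by exact_mod_cast h3
      omega
    calc nuI I g ≤ ((r * m + (r - 1) : ℕ) : ℕ∞) := hkey
    _ = (r : ℕ∞) * (m : ℕ∞) + ((r - 1 : ℕ) : ℕ∞) := by rw [Nat.cast_add, Nat.cast_mul]

theorem nubar_pow_ideal {A : Type*} [CommRing A] (I : Ideal A) (hI : I ≠ ⊤) (f : A)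
    (r : ℕ) (hr : 0 < r) :
    nubar (I ^ r) f = nubar I f / (r : ℝ≥0∞) := by
  unfold nubar
  have hr0 : (r : ℝ≥0∞) ≠ 0 := by exact_mod_cast hr.ne'
  have hrt : (r : ℝ≥0∞) ≠ ⊤ := by simp
  set a : ℕ → ℝ≥0∞ := fun n => (nuI I (f ^ n) : ℝ≥0∞) / (n : ℝ≥0∞) with ha
  set b : ℕ → ℝ≥0∞ := fun n => (nuI (I ^ r) (f ^ n) : ℝ≥0∞) / (n : ℝ≥0∞) with hbdef
  have key : atTop.limsup a = (r : ℝ≥0∞) * atTop.limsup b := by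
    apply le_antisymm
    · -- a n ≤ r * b n + (r-1)/n
      have hub : ∀ n : ℕ, a n ≤ (r : ℝ≥0∞) * b n + ((r - 1 : ℕ) : ℝ≥0∞) / (n : ℝ≥0∞) := by
        intro n
        have h1 : (nuI I (f ^ n) : ℝ≥0∞) ≤
            (r : ℝ≥0∞) * (nuI (I ^ r) (f ^ n) : ℝ≥0∞) + ((r - 1 : ℕ) : ℝ≥0∞) := by
          have := nuI_le_pow_mul I (f ^ n) hr
          calc (nuI I (f ^ n) : ℝ≥0∞)
              ≤ (((r : ℕ∞) * nuI (I ^ r) (f ^ n) + ((r - 1 : ℕ) : ℕ∞) : ℕ∞) : ℝ≥0∞) := by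
                exact_mod_cast this
          _ = (r : ℝ≥0∞) * (nuI (I ^ r) (f ^ n) : ℝ≥0∞) + ((r - 1 : ℕ) : ℝ≥0∞) := by
                push_cast; ring
        calc a n = (nuI I (f ^ n) : ℝ≥0∞) / (n : ℝ≥0∞) := rfl
        _ ≤ ((r : ℝ≥0∞) * (nuI (I ^ r) (f ^ n) : ℝ≥0∞) + ((r - 1 : ℕ) : ℝ≥0∞)) / (n : ℝ≥0∞) :=
            ENNReal.div_le_div_right h1 _
        _ = (r : ℝ≥0∞) * b n + ((r - 1 : ℕ) : ℝ≥0∞) / (n : ℝ≥0∞) := by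
            rw [ENNReal.add_div, mul_div_assoc]
      have htv : Tendsto (fun n : ℕ => ((r - 1 : ℕ) : ℝ≥0∞) / (n : ℝ≥0∞)) atTop (𝓝 0) := by
        have := ENNReal.Tendsto.const_mul (ENNReal.tendsto_inv_nat_nhds_zero)
          (Or.inr (by simp : ((r - 1 : ℕ) : ℝ≥0∞) ≠ ⊤))
        simpa [div_eq_mul_inv] using this
      rcases eq_or_ne (atTop.limsup b) ⊤ with hLb | hLb
      · rw [hLb, ENNReal.mul_top hr0]
        exact le_top
      · rw [limsup_le_iff]
        intro x hx
        obtain ⟨y, hy1, hy2⟩ := exists_between hx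
        have hytop : y ≠ ⊤ := (hy2.trans_le le_top).ne
        have hyr : atTop.limsup b < y / (r : ℝ≥0∞) := by
          rw [ENNReal.lt_div_iff_mul_lt (Or.inl hr0) (Or.inl hrt)]
          rwa [mul_comm] at hy1
        have hev1 : ∀ᶠ n : ℕ in atTop, b n < y / (r : ℝ≥0∞) :=
          eventually_lt_of_limsup_lt hyr
        have hev2 : ∀ᶠ n : ℕ in atTop,
            ((r - 1 : ℕ) : ℝ≥0∞) / (n : ℝ≥0∞) < x - y :=
          htv.eventually_lt_const (tsub_pos_of_lt hy2)
        filter_upwards [hev1, hev2] with n h1 h2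
        have hu : (r : ℝ≥0∞) * b n ≤ y :=
          (mul_le_mul_right h1.le _).trans ENNReal.mul_div_le
        calc a n ≤ (r : ℝ≥0∞) * b n + ((r - 1 : ℕ) : ℝ≥0∞) / (n : ℝ≥0∞) := hub n
        _ ≤ y + ((r - 1 : ℕ) : ℝ≥0∞) / (n : ℝ≥0∞) := add_le_add_left hu _
        _ < y + (x - y) := ENNReal.add_lt_add_left hytop h2
        _ ≤ x := by rw [add_tsub_cancel_of_le hy2.le]
    · have hlb : ∀ n : ℕ, (r : ℝ≥0∞) * b n ≤ a n := by
        intro n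
        have h1 : (r : ℝ≥0∞) * (nuI (I ^ r) (f ^ n) : ℝ≥0∞) ≤ (nuI I (f ^ n) : ℝ≥0∞) := by
          have := nuI_pow_mul_le I (f ^ n) hr
          calc (r : ℝ≥0∞) * (nuI (I ^ r) (f ^ n) : ℝ≥0∞)
              = (((r : ℕ∞) * nuI (I ^ r) (f ^ n) : ℕ∞) : ℝ≥0∞) := by push_cast; ring
          _ ≤ (nuI I (f ^ n) : ℝ≥0∞) := by exact_mod_cast this
        calc (r : ℝ≥0∞) * b n
            = (r : ℝ≥0∞) * (nuI (I ^ r) (f ^ n) : ℝ≥0∞) / (n : ℝ≥0∞) := by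
              rw [hbdef]; rw [mul_div_assoc]
        _ ≤ (nuI I (f ^ n) : ℝ≥0∞) / (n : ℝ≥0∞) := ENNReal.div_le_div_right h1 _
        _ = a n := rfl
      calc (r : ℝ≥0∞) * atTop.limsup b
          = atTop.limsup (fun n : ℕ => (r : ℝ≥0∞) * b n) :=
            (ENNReal.limsup_const_mul_of_ne_top hrt).symm
      _ ≤ atTop.limsup a := limsup_le_limsup (Eventually.of_forall hlb)
  rw [ENNReal.eq_div_iff hr0 hrt, key]
end

section
/- The asymptotic Samuel function ν̄_I of a proper ideal I in a commutative ring A is an order function: ν̄_I(f+g) ≥ min{ν̄_I(f), ν̄_I(g)}, ν̄_I(fg) ≥ ν̄_I(f) + ν̄_I(g), ν̄_I(0) = ∞, and ν̄_I(1) = 0. -/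
open Filter ENNReal

section Aux

variable {A : Type*} [CommRing A] (I : Ideal A)

lemma le_nuI {f : A} {m : ℕ} (h : f ∈ I ^ m) : (m : ℕ∞) ≤ nuI I f :=
  le_sSup ⟨m, rfl, h⟩

lemma mem_of_le_nuI {f : A} {m : ℕ} (h : (m : ℕ∞) ≤ nuI I f) : f ∈ I ^ m := by
  by_contra hm
  have hm0 : m ≠ 0 := by rintro rfl; simp at hm
  have h2 : nuI I f ≤ ((m - 1 : ℕ) : ℕ∞) := by
    apply sSup_le
    rintro n ⟨k, rfl, hk⟩
    have hkm : k ≤ m - 1 := by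
      by_contra hk'
      exact hm (Ideal.pow_le_pow_right (by omega) hk)
    exact_mod_cast hkm
  have h3 := h.trans h2
  have : m ≤ m - 1 := by exact_mod_cast h3
  omega

lemma nuI_one (hI : I ≠ ⊤) : nuI I 1 = 0 := by
  refine le_antisymm (sSup_le ?_) (zero_le)
  rintro n ⟨m, rfl, hm⟩
  have : m = 0 := by
    by_contra h
    exact hI (top_le_iff.mp ((Ideal.eq_top_iff_one _).mpr hm ▸ Ideal.pow_le_self h))
  simp [this]

lemma nuI_zero : nuI I 0 = ⊤ := by
  rw [eq_top_iff, ← ENat.iSup_natCast]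
  exact iSup_le fun m => le_nuI I (zero_mem _)

lemma div_le_nubar {f : A} {n a : ℕ} (hn : 1 ≤ n) (h : f ^ n ∈ I ^ a) :
    (a : ℝ≥0∞) / n ≤ nubar I f := by
  apply Filter.le_limsup_of_frequently_le ?_ (isBounded_le_of_top)
  rw [Filter.frequently_atTop]
  intro N
  refine ⟨n * (N + 1), by nlinarith, ?_⟩
  have hmem : f ^ (n * (N + 1)) ∈ I ^ (a * (N + 1)) := by
    rw [pow_mul, pow_mul]
    exact Ideal.pow_mem_pow h (N + 1)
  have h1 : ((a * (N + 1) : ℕ) : ℕ∞) ≤ nuI I (f ^ (n * (N + 1))) := le_nuI I hmem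
  have h2 : ((a * (N + 1) : ℕ) : ℝ≥0∞) ≤ (nuI I (f ^ (n * (N + 1))) : ℝ≥0∞) := by
    exact_mod_cast (by exact_mod_cast h1 : ((a * (N+1) : ℕ) : ℕ∞) ≤ _)
  calc (a : ℝ≥0∞) / n = ((a : ℝ≥0∞) * (N + 1)) / ((n : ℝ≥0∞) * (N + 1)) := by
        rw [ENNReal.mul_div_mul_right _ _ (by simp) (by simp)]
    _ ≤ _ := by
        have e1 : ((a : ℝ≥0∞) * (N + 1)) = ((a * (N+1) : ℕ) : ℝ≥0∞) := by push_cast; ring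
        have e2 : ((n : ℝ≥0∞) * (N + 1)) = ((n * (N+1) : ℕ) : ℝ≥0∞) := by push_cast; ring
        rw [e1, e2]
        exact ENNReal.div_le_div h2 le_rfl

lemma exists_of_lt_nubar {f : A} {x : ℝ≥0∞} (hx : x < nubar I f) :
    ∃ n a : ℕ, 1 ≤ n ∧ f ^ n ∈ I ^ a ∧ x < (a : ℝ≥0∞) / n := by
  have hfreq : ∃ᶠ n : ℕ in atTop, x < (nuI I (f ^ n) : ℝ≥0∞) / n :=
    Filter.frequently_lt_of_lt_limsup (by isBoundedDefault) hx
  obtain ⟨n, hn1, hn⟩ := (Filter.frequently_atTop.mp hfreq) 1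
  have hxt : x ≠ ⊤ := hn.ne_top
  cases hc : nuI I (f ^ n) with
  | top =>
    obtain ⟨c, hc'⟩ := ENNReal.exists_nat_gt hxt
    refine ⟨n, c * n, hn1, mem_of_le_nuI I (by simp [hc]), ?_⟩
    have : ((c * n : ℕ) : ℝ≥0∞) / n = c := by
      push_cast
      rw [mul_div_assoc, ENNReal.div_self (by exact_mod_cast Nat.one_le_iff_ne_zero.mp hn1)
        (by simp), mul_one]
    rw [this]; exact hc'
  | coe a =>
    refine ⟨n, a, hn1, mem_of_le_nuI I (by simp [hc]), ?_⟩
    rw [hc] at hn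
    exact_mod_cast hn

lemma nubar_le_nubar_mul (f g : A) : nubar I g ≤ nubar I (f * g) := by
  apply Filter.limsup_le_limsup ?_
  · filter_upwards with N
    apply ENNReal.div_le_div ?_ le_rfl
    rw [ENat.toENNReal_le]
    apply sSup_le
    rintro x ⟨k, rfl, hk⟩
    exact le_nuI I (by rw [mul_pow]; exact Ideal.mul_mem_left _ _ hk)

lemma nubar_mul (f g : A) : nubar I f + nubar I g ≤ nubar I (f * g) := by
  rcases eq_or_ne (nubar I f) 0 with h0 | h0
  · rw [h0, zero_add]; exact nubar_le_nubar_mul I f g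
  rcases eq_or_ne (nubar I g) 0 with h1 | h1
  · rw [h1, add_zero, mul_comm]; exact nubar_le_nubar_mul I g f
  by_contra hz
  push_neg at hz
  obtain ⟨x, hx, y, hy, hxy⟩ := ENNReal.exists_lt_add_of_lt_add hz h0 h1
  obtain ⟨n, a, hn, hfa, hxa⟩ := exists_of_lt_nubar I hx
  obtain ⟨m, b, hm, hgb, hyb⟩ := exists_of_lt_nubar I hy
  have hmem : (f * g) ^ (n * m) ∈ I ^ (a * m + b * n) := by
    rw [mul_pow, pow_add]
    apply Ideal.mul_mem_mul
    · rw [pow_mul, pow_mul]; exact Ideal.pow_mem_pow hfa m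
    · rw [show n * m = m * n from mul_comm n m, pow_mul, pow_mul]
      exact Ideal.pow_mem_pow hgb n
  have hle : ((a * m + b * n : ℕ) : ℝ≥0∞) / ((n * m : ℕ) : ℝ≥0∞) ≤ nubar I (f * g) :=
    div_le_nubar I (by nlinarith) hmem
  have heq : (a : ℝ≥0∞) / n + (b : ℝ≥0∞) / m
      = ((a * m + b * n : ℕ) : ℝ≥0∞) / ((n * m : ℕ) : ℝ≥0∞) := by
    push_cast
    rw [← ENNReal.mul_div_mul_right (a : ℝ≥0∞) (n : ℝ≥0∞) (c := (m : ℝ≥0∞))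
        (by exact_mod_cast Nat.one_le_iff_ne_zero.mp hm) (by simp),
      ← ENNReal.mul_div_mul_right (b : ℝ≥0∞) (m : ℝ≥0∞) (c := (n : ℝ≥0∞))
        (by exact_mod_cast Nat.one_le_iff_ne_zero.mp hn) (by simp),
      show (m : ℝ≥0∞) * n = n * m from mul_comm _ _, ENNReal.div_add_div_same]
  have : x + y < nubar I (f * g) := by
    calc x + y < (a : ℝ≥0∞) / n + (b : ℝ≥0∞) / m := by
          exact ENNReal.add_lt_add hxa hyb
      _ ≤ _ := heq ▸ hle
  exact (hxy.trans this).false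

lemma sum_pow_mem {f g : A} {n m a b : ℕ} (hn : 1 ≤ n) (hm : 1 ≤ m)
    (hfa : f ^ n ∈ I ^ a) (hgb : g ^ m ∈ I ^ b) (N : ℕ) :
    (f + g) ^ N ∈ I ^ (min (a * m) (b * n) * N / (n * m) - (a + b)) := by
  set M := min (a * m) (b * n) with hM
  rw [add_pow]
  apply Submodule.sum_mem
  intro k hk
  rw [Finset.mem_range, Nat.lt_succ_iff] at hk
  have h1 : f ^ k ∈ I ^ (a * (k / n)) := by
    have hfk : f ^ k = (f ^ n) ^ (k / n) * f ^ (k % n) := by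
      rw [← pow_mul, ← pow_add, Nat.div_add_mod]
    rw [hfk, pow_mul I a (k / n)]
    exact Ideal.mul_mem_right _ _ (Ideal.pow_mem_pow hfa _)
  have h2 : g ^ (N - k) ∈ I ^ (b * ((N - k) / m)) := by
    have hgk : g ^ (N - k) = (g ^ m) ^ ((N - k) / m) * g ^ ((N - k) % m) := by
      rw [← pow_mul, ← pow_add, Nat.div_add_mod]
    rw [hgk, pow_mul I b ((N - k) / m)]
    exact Ideal.mul_mem_right _ _ (Ideal.pow_mem_pow hgb _)
  have h3 : f ^ k * g ^ (N - k) * (N.choose k : A)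
      ∈ I ^ (a * (k / n) + b * ((N - k) / m)) := by
    rw [pow_add]
    exact Ideal.mul_mem_right _ _ (Ideal.mul_mem_mul h1 h2)
  refine Ideal.pow_le_pow_right ?_ h3
  have hk1 : k < n * (k / n) + n := by
    have := Nat.div_add_mod k n
    have := Nat.mod_lt k (show 0 < n by omega)
    omega
  have hk2 : N - k < m * ((N - k) / m) + m := by
    have := Nat.div_add_mod (N - k) m
    have := Nat.mod_lt (N - k) (show 0 < m by omega)
    omega
  have hMN : M * N ≤ (n * m) * (a * (k / n) + b * ((N - k) / m) + (a + b)) := by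
    have hM1 : M ≤ a * m := Nat.min_le_left _ _
    have hM2 : M ≤ b * n := Nat.min_le_right _ _
    have e1 : a * m * k ≤ a * m * (n * (k / n) + n) := Nat.mul_le_mul_left _ (by omega)
    have e2 : b * n * (N - k) ≤ b * n * (m * ((N - k) / m) + m) := Nat.mul_le_mul_left _ (by omega)
    calc M * N = M * k + M * (N - k) := by rw [← Nat.mul_add, Nat.add_sub_cancel' hk]
      _ ≤ a * m * k + b * n * (N - k) :=
          Nat.add_le_add (Nat.mul_le_mul_right _ hM1) (Nat.mul_le_mul_right _ hM2)
      _ ≤ a * m * (n * (k / n) + n) + b * n * (m * ((N - k) / m) + m) := Nat.add_le_add e1 e2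
      _ = (n * m) * (a * (k / n) + b * ((N - k) / m) + (a + b)) := by ring
  have hdiv : M * N / (n * m) ≤ a * (k / n) + b * ((N - k) / m) + (a + b) := by
    calc M * N / (n * m) ≤ (n * m) * (a * (k / n) + b * ((N - k) / m) + (a + b)) / (n * m) :=
          Nat.div_le_div_right hMN
      _ = _ := Nat.mul_div_cancel_left _ (Nat.mul_pos (by omega) (by omega))
  omega

lemma nubar_min (f g : A) : min (nubar I f) (nubar I g) ≤ nubar I (f + g) := by
  by_contra h
  push_neg at h
  obtain ⟨x, hx1, hx2⟩ := exists_between h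
  obtain ⟨n, a, hn, hfa, hxa⟩ := exists_of_lt_nubar I (hx2.trans_le (min_le_left _ _))
  obtain ⟨m, b, hm, hgb, hxb⟩ := exists_of_lt_nubar I (hx2.trans_le (min_le_right _ _))
  set M := min (a * m) (b * n) with hMdef
  set K := n * m with hKdef
  have hK0 : K ≠ 0 := by positivity
  have hK0' : ((K : ℕ) : ℝ≥0∞) ≠ 0 := by exact_mod_cast hK0
  have hKt : ((K : ℕ) : ℝ≥0∞) ≠ ⊤ := by simp
  have hxMK : x < (M : ℝ≥0∞) / K := by
    have hcast : (M : ℝ≥0∞) = min ((a * m : ℕ) : ℝ≥0∞) ((b * n : ℕ) : ℝ≥0∞) := by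
      rw [hMdef]
      exact_mod_cast (Nat.mono_cast (α := ℝ≥0∞)).map_min
    have hmono : Monotone (fun y : ℝ≥0∞ => y / ((K : ℕ) : ℝ≥0∞)) :=
      fun _ _ hab => ENNReal.div_le_div hab le_rfl
    have hdivmin : (M : ℝ≥0∞) / K
        = min (((a * m : ℕ) : ℝ≥0∞) / K) (((b * n : ℕ) : ℝ≥0∞) / K) := by
      rw [hcast]; exact hmono.map_min
    have e1 : ((a * m : ℕ) : ℝ≥0∞) / K = (a : ℝ≥0∞) / n := by
      push_cast [hKdef]
      exact ENNReal.mul_div_mul_right _ _ (by exact_mod_cast Nat.one_le_iff_ne_zero.mp hm) (by simp)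
    have e2 : ((b * n : ℕ) : ℝ≥0∞) / K = (b : ℝ≥0∞) / m := by
      push_cast [hKdef]
      rw [show (n : ℝ≥0∞) * m = m * n from mul_comm _ _]
      exact ENNReal.mul_div_mul_right _ _ (by exact_mod_cast Nat.one_le_iff_ne_zero.mp hn) (by simp)
    rw [hdivmin, e1, e2, lt_min_iff]
    exact ⟨hxa, hxb⟩
  have claim : ∀ N : ℕ, 1 ≤ N → (M : ℝ≥0∞) / K
      ≤ ((M * N / K - (a + b) : ℕ) : ℝ≥0∞) / N + ((a + b + 1 : ℕ) : ℝ≥0∞) / N := by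
    intro N hN
    have hN0' : ((N : ℕ) : ℝ≥0∞) ≠ 0 := by exact_mod_cast Nat.one_le_iff_ne_zero.mp hN
    have hNt : ((N : ℕ) : ℝ≥0∞) ≠ ⊤ := by simp
    have hnat : M * N ≤ K * (M * N / K - (a + b) + (a + b + 1)) := by
      have h1 : M * N / K + 1 ≤ M * N / K - (a + b) + (a + b + 1) := by omega
      have h2 : K * (M * N / K + 1) ≤ K * (M * N / K - (a + b) + (a + b + 1)) :=
        Nat.mul_le_mul_left _ h1
      have h3 := Nat.div_add_mod (M * N) K
      have h4 := Nat.mod_lt (M * N) (Nat.pos_of_ne_zero hK0)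
      have h5 : K * (M * N / K + 1) = K * (M * N / K) + K := by ring
      omega
    rw [← ENNReal.add_div]
    have hcast : ((M * N / K - (a + b) : ℕ) : ℝ≥0∞) + ((a + b + 1 : ℕ) : ℝ≥0∞)
        = ((M * N / K - (a + b) + (a + b + 1) : ℕ) : ℝ≥0∞) := by push_cast; ring
    rw [hcast]
    set Q : ℝ≥0∞ := ((M * N / K - (a + b) + (a + b + 1) : ℕ) : ℝ≥0∞) with hQ
    have hQK : (M : ℝ≥0∞) * N ≤ Q * K := by
      rw [hQ]
      calc (M : ℝ≥0∞) * N = ((M * N : ℕ) : ℝ≥0∞) := by push_cast; ring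
        _ ≤ ((K * (M * N / K - (a + b) + (a + b + 1)) : ℕ) : ℝ≥0∞) := by exact_mod_cast hnat
        _ = _ := by push_cast; ring
    calc (M : ℝ≥0∞) / K = ((M : ℝ≥0∞) * N) / ((K : ℕ) * (N : ℕ) : ℝ≥0∞) := by
          rw [show ((K : ℕ) * (N : ℕ) : ℝ≥0∞) = ((K : ℕ) : ℝ≥0∞) * N from rfl,
            ENNReal.mul_div_mul_right _ _ hN0' hNt]
      _ ≤ (Q * K) / ((K : ℕ) * (N : ℕ) : ℝ≥0∞) := ENNReal.div_le_div hQK le_rfl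
      _ = Q / N := by
          rw [show ((K : ℕ) * (N : ℕ) : ℝ≥0∞) = ((N : ℕ) : ℝ≥0∞) * K from mul_comm _ _,
            ENNReal.mul_div_mul_right _ _ hK0' hKt]
  set t : ℝ≥0∞ := ((a + b + 1 : ℕ) : ℝ≥0∞) with ht
  have htt : t ≠ ⊤ := by simp [ht]
  have ht0 : t ≠ 0 := by rw [ht]; exact_mod_cast (by omega : a + b + 1 ≠ 0)
  set δ : ℝ≥0∞ := (M : ℝ≥0∞) / K - x with hδ
  have hδ0 : δ ≠ 0 := by rw [hδ]; exact (tsub_pos_of_lt hxMK).ne'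
  have hδt : δ ≠ ⊤ := by
    rw [hδ]
    exact ENNReal.sub_ne_top (ENNReal.div_lt_top (by simp) hK0').ne
  have hxδ : x + δ = (M : ℝ≥0∞) / K := add_tsub_cancel_of_le hxMK.le
  obtain ⟨N₀, hN₀⟩ := ENNReal.exists_nat_gt (show t / δ ≠ ⊤ from (ENNReal.div_lt_top htt hδ0).ne)
  have hev : ∀ᶠ N : ℕ in atTop, x ≤ (nuI I ((f + g) ^ N) : ℝ≥0∞) / N := by
    filter_upwards [Filter.eventually_ge_atTop (max N₀ 1)] with N hNlarge
    have hN1 : 1 ≤ N := le_trans (le_max_right _ _) hNlarge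
    have hNN₀ : N₀ ≤ N := le_trans (le_max_left _ _) hNlarge
    have hN0' : ((N : ℕ) : ℝ≥0∞) ≠ 0 := by exact_mod_cast Nat.one_le_iff_ne_zero.mp hN1
    have hNt : ((N : ℕ) : ℝ≥0∞) ≠ ⊤ := by simp
    have htN : t / N ≤ δ := by
      have h1 : t ≤ (N₀ : ℝ≥0∞) * δ :=
        (ENNReal.div_le_iff_le_mul (Or.inl hδ0) (Or.inl hδt)).mp hN₀.le
      calc t / N ≤ ((N₀ : ℝ≥0∞) * δ) / N := ENNReal.div_le_div h1 le_rfl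
        _ ≤ ((N : ℝ≥0∞) * δ) / N :=
            ENNReal.div_le_div (mul_le_mul_left (by exact_mod_cast hNN₀) δ) le_rfl
        _ = δ := by
            rw [mul_comm, mul_div_assoc, ENNReal.div_self hN0' hNt, mul_one]
    have hEN : x ≤ ((M * N / K - (a + b) : ℕ) : ℝ≥0∞) / N := by
      have h1 : x + t / N ≤ ((M * N / K - (a + b) : ℕ) : ℝ≥0∞) / N + t / N := by
        calc x + t / N ≤ x + δ := add_le_add_right htN x
          _ = (M : ℝ≥0∞) / K := hxδ
          _ ≤ _ := claim N hN1
      exact (ENNReal.add_le_add_iff_right (ENNReal.div_lt_top htt hN0').ne).mp h1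
    refine hEN.trans (ENNReal.div_le_div ?_ le_rfl)
    have hmem := sum_pow_mem I hn hm hfa hgb N
    have := le_nuI I hmem
    exact_mod_cast ENat.toENNReal_le.mpr this
  have : x ≤ nubar I (f + g) :=
    Filter.le_limsup_of_frequently_le hev.frequently
  exact absurd this (not_le.mpr hx1)

lemma nubar_zero : nubar I 0 = ⊤ := by
  rw [eq_top_iff]
  apply Filter.le_limsup_of_frequently_le ?_ (isBounded_le_of_top)
  rw [Filter.frequently_atTop]
  intro N
  refine ⟨max N 1, le_max_left _ _, ?_⟩
  have h1 : (0 : A) ^ (max N 1) = 0 := zero_pow (by omega)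
  rw [h1, nuI_zero]
  rw [ENat.toENNReal_top, ENNReal.top_div_of_ne_top (by simp)]

lemma nubar_one (hI : I ≠ ⊤) : nubar I 1 = 0 := by
  have : (fun n : ℕ => (nuI I ((1:A) ^ n) : ℝ≥0∞) / (n : ℝ≥0∞)) = fun _ => 0 := by
    funext n
    rw [one_pow, nuI_one I hI]
    simp
  rw [nubar, this, Filter.limsup_const]

end Aux

/-- The asymptotic Samuel function is an order function. -/
theorem nubar_isOrderFunction {A : Type*} [CommRing A] (I : Ideal A) (hI : I ≠ ⊤) :
    (∀ f g : A, min (nubar I f) (nubar I g) ≤ nubar I (f + g)) ∧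
    (∀ f g : A, nubar I f + nubar I g ≤ nubar I (f * g)) ∧
    nubar I 0 = ⊤ ∧ nubar I 1 = 0 := by
  exact ⟨nubar_min I, nubar_mul I, nubar_zero I, nubar_one I hI⟩
end

section
/- Let (A, m, k) be a Noetherian local ring of dimension d with embedding dimension d + t, t > 0, which is in the extremal case, i.e., dim_k ker(λ_m) = t. Then m admits a reduction generated by d elements. -/
open Filter ENNReal

open IsLocalRing

/-- The kernel of `λ_m : m/m² → m^{(≥1)}/m^{(>1)}`, i.e. the subspace of the cotangent
space consisting of classes of elements `f ∈ m` with `ν̄_m(f) > 1` (equivalently, whose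
initial forms are nilpotent in `Gr_m(A)`).  The set of such classes is already a
subspace, so taking the span does not change it. -/
noncomputable def kerLambda (A : Type*) [CommRing A] [IsLocalRing A] :
    Submodule (ResidueField A) (CotangentSpace A) :=
  Submodule.span (ResidueField A)
    {x : CotangentSpace A | ∃ f, ∃ hf : f ∈ maximalIdeal A,
      x = (maximalIdeal A).toCotangent ⟨f, hf⟩ ∧ 1 < nubar (maximalIdeal A) f}

lemma exists_pow_mem_of_one_lt_nubar {A : Type*} [CommRing A] {I : Ideal A} {f : A}
    (h : 1 < nubar I f) : ∃ n : ℕ, 0 < n ∧ f ^ n ∈ I ^ (n + 1) := by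
  by_contra hc
  push_neg at hc
  have hb : ∀ n : ℕ, 0 < n → nuI I (f ^ n) ≤ (n : ℕ∞) := by
    intro n hn
    apply sSup_le
    rintro k ⟨m', rfl, hm⟩
    by_contra hk
    push_neg at hk
    have hnm : n + 1 ≤ m' := by exact_mod_cast Nat.succ_le_of_lt (by exact_mod_cast hk)
    exact hc n hn (Ideal.pow_le_pow_right hnm hm)
  have hle : nubar I f ≤ 1 := by
    apply Filter.limsup_le_of_le (by isBoundedDefault)
    filter_upwards [Filter.eventually_gt_atTop 0] with n hn
    have h1 : (nuI I (f ^ n) : ℝ≥0∞) ≤ (n : ℝ≥0∞) := by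
      have := hb n hn
      calc (nuI I (f ^ n) : ℝ≥0∞) ≤ ((n : ℕ∞) : ℝ≥0∞) := by exact_mod_cast this
        _ = (n : ℝ≥0∞) := by simp
    calc (nuI I (f ^ n) : ℝ≥0∞) / (n : ℝ≥0∞) ≤ (n : ℝ≥0∞) / (n : ℝ≥0∞) :=
          ENNReal.div_le_div_right h1 _
      _ = 1 := ENNReal.div_self (by exact_mod_cast hn.ne') (by simp)
  exact absurd h (not_lt.mpr hle)



lemma ideal_sum_le {A : Type*} [CommRing A] {ι : Type*} (s : Finset ι) (f : ι → Ideal A)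
    (X : Ideal A) (h : ∀ i ∈ s, f i ≤ X) : ∑ i ∈ s, f i ≤ X :=
  Finset.sum_induction f (· ≤ X) (fun a b ha hb => sup_le ha hb) bot_le h

lemma aux_pow_le {A : Type*} [CommRing A] (m : Ideal A) {ι : Type*} (δ : ι → A)
    (s : Finset ι) (hmem : ∀ j ∈ s, δ j ∈ m)
    (hnil : ∀ j ∈ s, ∃ N : ℕ, 0 < N ∧ δ j ^ N ∈ m ^ (N + 1)) :
    ∃ B : ℕ, 0 < B ∧ ∀ b : ℕ, B ≤ b → Ideal.span (δ '' ↑s) ^ b ≤ m ^ (b + 1) := by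
  classical
  induction s using Finset.induction with
  | empty =>
    refine ⟨1, one_pos, fun b hb => ?_⟩
    simp only [Finset.coe_empty, Set.image_empty, Ideal.span_empty]
    rw [← Ideal.zero_eq_bot, zero_pow (by omega : b ≠ 0), Ideal.zero_eq_bot]
    exact bot_le
  | @insert a s ha ih =>
    obtain ⟨Na, hNa, hpa⟩ := hnil a (Finset.mem_insert_self a s)
    obtain ⟨B, hB, ihB⟩ := ih (fun j hj => hmem j (Finset.mem_insert_of_mem hj))
      (fun j hj => hnil j (Finset.mem_insert_of_mem hj))
    refine ⟨B + Na, by omega, fun b hb => ?_⟩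
    have hQm : Ideal.span (δ '' ↑s) ≤ m := Ideal.span_le.mpr (by
      rintro x ⟨j, hj, rfl⟩; exact hmem j (Finset.mem_insert_of_mem hj))
    have hPm : Ideal.span {δ a} ≤ m :=
      Ideal.span_le.mpr (by simp [hmem a (Finset.mem_insert_self a s)])
    have hexp : Ideal.span (δ '' ↑(insert a s)) = Ideal.span {δ a} + Ideal.span (δ '' ↑s) := by
      rw [Finset.coe_insert, Set.image_insert_eq, Ideal.span_insert, Submodule.add_eq_sup]
    rw [hexp, add_pow]
    apply ideal_sum_le
    intro k hk
    rw [Finset.mem_range] at hk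
    have hkb : k ≤ b := by omega
    have key : Ideal.span {δ a} ^ k * Ideal.span (δ '' ↑s) ^ (b - k) ≤ m ^ (b + 1) := by
      by_cases hcase : Na ≤ k
      · have h1 : Ideal.span {δ a} ^ k ≤ m ^ (k + 1) := by
          rw [Ideal.span_singleton_pow, Ideal.span_singleton_le_iff_mem]
          have : δ a ^ k = δ a ^ Na * δ a ^ (k - Na) := by
            rw [← pow_add]; congr 1; omega
          rw [this]
          have : m ^ (Na + 1) * m ^ (k - Na) = m ^ (k + 1) := by
            rw [← pow_add]; congr 1; omega
          rw [← this]
          exact Ideal.mul_mem_mul hpa (Ideal.pow_mem_pow (hmem a (Finset.mem_insert_self a s)) _)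
        calc Ideal.span {δ a} ^ k * Ideal.span (δ '' ↑s) ^ (b - k)
            ≤ m ^ (k + 1) * m ^ (b - k) := Ideal.mul_mono h1 (Ideal.pow_right_mono hQm _)
          _ = m ^ (b + 1) := by rw [← pow_add]; congr 1; omega
      · have hbk : B ≤ b - k := by omega
        calc Ideal.span {δ a} ^ k * Ideal.span (δ '' ↑s) ^ (b - k)
            ≤ m ^ k * m ^ (b - k + 1) := Ideal.mul_mono (Ideal.pow_right_mono hPm _) (ihB _ hbk)
          _ = m ^ (b + 1) := by rw [← pow_add]; congr 1; omega
    calc Ideal.span {δ a} ^ k * Ideal.span (δ '' ↑s) ^ (b - k) * (b.choose k : Ideal A)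
        ≤ Ideal.span {δ a} ^ k * Ideal.span (δ '' ↑s) ^ (b - k) * ⊤ :=
          Ideal.mul_mono le_rfl le_top
      _ = Ideal.span {δ a} ^ k * Ideal.span (δ '' ↑s) ^ (b - k) := Ideal.mul_top _
      _ ≤ m ^ (b + 1) := key



-- m^(c+1) ≤ I * m^c ⊔ J^(c+1) when m = I ⊔ J
lemma aux_chain {A : Type*} [CommRing A] (m I J : Ideal A) (hm : m = I ⊔ J) (c : ℕ) :
    m ^ (c + 1) ≤ I * m ^ c ⊔ J ^ (c + 1) := by
  induction c with
  | zero => simp [pow_one, hm, Ideal.mul_top]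
  | succ c ih =>
    calc m ^ (c + 2) = m ^ (c + 1) * m := by rw [← pow_succ]
      _ ≤ (I * m ^ c ⊔ J ^ (c + 1)) * m := Ideal.mul_mono ih le_rfl
      _ = I * m ^ c * m ⊔ J ^ (c + 1) * m := Ideal.sup_mul _ _ _
      _ ≤ I * m ^ (c + 1) ⊔ J ^ (c + 2) := by
          apply sup_le
          · rw [mul_assoc, ← pow_succ]; exact le_sup_left
          · rw [hm, Ideal.mul_sup]
            apply sup_le
            · refine le_trans ?_ (le_sup_left (b := J ^ (c+2)))
              rw [mul_comm]
              exact Ideal.mul_mono le_rfl (Ideal.pow_right_mono le_sup_right _)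
            · rw [← pow_succ]; exact le_sup_right

lemma aux_krull {A : Type*} [CommRing A] [IsNoetherianRing A] [IsLocalRing A] (N : Ideal A)
    (x : A) (hx : ∀ k : ℕ, x ∈ N ⊔ (IsLocalRing.maximalIdeal A) ^ k) : x ∈ N := by
  set m := IsLocalRing.maximalIdeal A
  have hbot := Ideal.iInf_pow_smul_eq_bot_of_isLocalRing (R := A) (M := A ⧸ N) (I := m)
    (IsLocalRing.maximalIdeal.isMaximal A).ne_top
  have hmem : Submodule.Quotient.mk (p := N) x ∈ (⨅ i : ℕ, m ^ i • ⊤ : Submodule A (A ⧸ N)) := by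
    rw [Submodule.mem_iInf]
    intro i
    obtain ⟨y, hy, z, hz, rfl⟩ := Submodule.mem_sup.mp (hx i)
    have : Submodule.Quotient.mk (p := N) (y + z) = Submodule.Quotient.mk (p := N) z := by
      rw [Submodule.Quotient.eq]; simpa using hy
    rw [this]
    have : Submodule.Quotient.mk (p := N) z = z • Submodule.Quotient.mk (p := N) 1 := by
      rw [← Submodule.Quotient.mk_smul]; congr 1; simp [smul_eq_mul]
    rw [this]
    exact Submodule.smul_mem_smul hz Submodule.mem_top
  rw [hbot, Submodule.mem_bot] at hmem
  exact (Submodule.Quotient.mk_eq_zero N).mp hmem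

/-- If `(A,m,k)` is Noetherian local of dimension `d`, embedding dimension `d + t`
with `t > 0`, and is in the extremal case (`dim_k ker(λ_m) = t`), then `m` admits a
reduction generated by `d` elements. -/
theorem extremal_exists_reduction {A : Type*} [CommRing A] [IsLocalRing A]
    [IsNoetherianRing A] (d t : ℕ) (ht : 0 < t) (hd : ringKrullDim A = d)
    (hemb : Module.finrank (ResidueField A) (CotangentSpace A) = d + t)
    (hext : Module.finrank (ResidueField A) (kerLambda A) = t) :
    ∃ κ : Fin d → A, (∀ i, κ i ∈ maximalIdeal A) ∧
      ∃ n : ℕ, Ideal.span (Set.range κ) * (maximalIdeal A) ^ n = (maximalIdeal A) ^ (n + 1) := by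
  classical
  set K := ResidueField A
  set V := CotangentSpace A
  set m := maximalIdeal A with hm_def
  set S : Set V := {x : V | ∃ f, ∃ hf : f ∈ m,
      x = m.toCotangent ⟨f, hf⟩ ∧ 1 < nubar m f} with hS_def
  obtain ⟨b, hbS, hbspan, hbli⟩ := exists_linearIndependent K S
  replace hbli : LinearIndepOn K id b := hbli
  have hbfin : b.Finite := by
    have := hbli.finite
    exact Set.toFinite b
  -- the extension
  set c : Set V := hbli.extend (Set.subset_univ b) with hc_def
  have hbc : b ⊆ c := hbli.subset_extend _
  have hcli : LinearIndependent K (Subtype.val : c → V) := hbli.linearIndepOn_extend _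
  have hcspan : Submodule.span K c = ⊤ := by
    rw [eq_top_iff]
    exact le_trans (by simp) (Submodule.span_le.mpr (hbli.subset_span_extend _))
  have hcfin : c.Finite := by
    have := hcli.finite
    exact Set.toFinite c
  haveI : Fintype c := hcfin.fintype
  haveI : Fintype b := hbfin.fintype
  -- cardinalities
  have hcard_c : c.toFinset.card = d + t := by
    have h1 := finrank_span_set_eq_card (s := c) hcli
    rw [hcspan, finrank_top] at h1
    rw [← h1]
    exact hemb
  have hcard_b : b.toFinset.card = t := by
    have h1 := finrank_span_set_eq_card (s := b) hbli
    rw [hbspan] at h1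
    have : Submodule.span K S = kerLambda A := rfl
    rw [this, hext] at h1
    omega
  -- the complement
  set e : Set V := c \ b with he_def
  haveI : Fintype e := (hcfin.subset (Set.diff_subset)).fintype
  have hcard_e : e.toFinset.card = d := by
    have : e.toFinset = c.toFinset \ b.toFinset := by
      ext x; simp [he_def]
    rw [this, Finset.card_sdiff_of_subset (by intro x hx; simp only [Set.mem_toFinset] at *; exact hbc hx)]
    omega
  -- lifts
  have hlift : ∀ x : V, ∃ y : m, m.toCotangent y = x ∧
      (x ∈ b → ∃ N : ℕ, 0 < N ∧ (y : A) ^ N ∈ m ^ (N + 1)) := by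
    intro x
    by_cases hxb : x ∈ b
    · obtain ⟨f, hf, hfe, hfnu⟩ := hbS hxb
      obtain ⟨N, hN, hNm⟩ := exists_pow_mem_of_one_lt_nubar hfnu
      exact ⟨⟨f, hf⟩, hfe.symm, fun _ => ⟨N, hN, hNm⟩⟩
    · obtain ⟨y, hy⟩ := Ideal.toCotangent_surjective m x
      exact ⟨y, hy, fun hxb' => absurd hxb' hxb⟩
  choose g hg1 hg2 using hlift
  -- generation
  have himg : m.toCotangent '' (g '' c) = c := by
    ext x
    constructor
    · rintro ⟨y, ⟨z, hz, rfl⟩, rfl⟩; rw [hg1]; exact hz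
    · intro hx; exact ⟨g x, ⟨x, hx, rfl⟩, hg1 x⟩
  have hspan_c : Ideal.span ((Subtype.val ∘ g) '' c) = m := by
    have h1 : Submodule.span K (m.toCotangent '' (g '' c)) = ⊤ := by rw [himg]; exact hcspan
    have h2 : Submodule.span A (g '' c) = ⊤ :=
      (IsLocalRing.CotangentSpace.span_image_eq_top_iff).mp h1
    have h3 := congrArg (Submodule.map m.subtype) h2
    rw [Submodule.map_span, Submodule.map_top, Submodule.range_subtype] at h3
    rw [Set.image_comp]
    exact h3
  -- the two ideals
  have hcardE : Fintype.card e = d := by rw [← Set.toFinset_card]; exact hcard_e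
  let eqv : Fin d ≃ e := (Fintype.equivFinOfCardEq hcardE).symm
  let κ : Fin d → A := fun i => (g (eqv i) : A)
  have hκmem : ∀ i, κ i ∈ m := fun i => (g (eqv i)).2
  have hrange : Set.range κ = (Subtype.val ∘ g) '' e := by
    ext x
    constructor
    · rintro ⟨i, rfl⟩; exact ⟨eqv i, (eqv i).2, rfl⟩
    · rintro ⟨y, hy, rfl⟩
      exact ⟨eqv.symm ⟨y, hy⟩, by simp [κ]⟩
  set I : Ideal A := Ideal.span (Set.range κ) with hI_def
  set J : Ideal A := Ideal.span ((Subtype.val ∘ g) '' b) with hJ_def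
  have hIJ : m = I ⊔ J := by
    rw [hI_def, hJ_def, hrange, ← Ideal.span_union, ← Set.image_union,
      Set.diff_union_of_subset hbc, hspan_c]
  have hIm : I ≤ m := by
    rw [hI_def, Ideal.span_le]
    rintro x ⟨i, rfl⟩; exact hκmem i
  -- powers of J
  obtain ⟨B, hB, hpow⟩ := aux_pow_le m (Subtype.val ∘ g) b.toFinset
    (by intro j hj; exact (g j).2)
    (by intro j hj; rw [Set.mem_toFinset] at hj; exact hg2 j hj)
  rw [Set.coe_toFinset] at hpow
  -- the chain
  have hchain : ∀ k : ℕ, m ^ (B + 1) ≤ I * m ^ B ⊔ m ^ (B + 1 + k) := by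
    intro k
    induction k with
    | zero => exact le_sup_right
    | succ k ih =>
      refine le_trans ih (sup_le le_sup_left ?_)
      have h1 : m ^ (B + 1 + k) ≤ I * m ^ (B + k) ⊔ J ^ (B + k + 1) := by
        have := aux_chain m I J hIJ (B + k)
        have he : B + 1 + k = B + k + 1 := by omega
        rw [he]; exact this
      have h2 : J ^ (B + k + 1) ≤ m ^ (B + k + 2) := hpow _ (by omega)
      refine le_trans h1 (sup_le ?_ ?_)
      · exact le_sup_of_le_left (Ideal.mul_mono le_rfl (Ideal.pow_le_pow_right (by omega)))
      · refine le_sup_of_le_right (le_trans h2 ?_)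
        have he : B + 1 + (k + 1) = B + k + 2 := by omega
        rw [he]
  -- Krull intersection
  have hfinal : m ^ (B + 1) ≤ I * m ^ B := by
    intro x hx
    apply aux_krull (I * m ^ B) x
    intro k
    have h1 : x ∈ I * m ^ B ⊔ m ^ (B + 1 + k) := hchain k hx
    refine Submodule.mem_sup.mp h1 |>.elim ?_
    rintro y ⟨hy, z, hz, rfl⟩
    exact Submodule.add_mem_sup hy (Ideal.pow_le_pow_right (by omega) hz)
  refine ⟨κ, hκmem, B, le_antisymm ?_ hfinal⟩
  calc I * m ^ B ≤ m * m ^ B := Ideal.mul_mono hIm le_rfl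
    _ = m ^ (B + 1) := by rw [← pow_succ']
end
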